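/- Let N ≥ 1. For every θ ∈ [0, π], the spectral distance between coherent states on the same meridian satisfies ρ_N(θ) ≤ d_N(ψ^N_(0,θ), ψ^N_(0,0)) ≤ θ; moreover, for every φ ∈ (−π, π], the distance along the equator satisfies d_N(ψ^N_(φ,π/2), ψ^N_(0,π/2)) ≤ |φ|. -/

import Mathlib

noncomputable section
open Matrix

/-- The diagonal matrix `H` with `H|m⟩ = m|m⟩`, `m = i - N/2` for index `i : Fin (N+1)`. -/
def Hmat (N : ℕ) : Matrix (Fin (N + 1)) (Fin (N + 1)) ℂ :=
  Matrix.diagonal fun i => (i : ℂ) - (N : ℂ) / 2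

/-- The raising operator `E` with `E|m⟩ = √((j-m)(j+m+1)) |m+1⟩`, `j = N/2`. -/
def Emat (N : ℕ) : Matrix (Fin (N + 1)) (Fin (N + 1)) ℂ := fun p q =>
  if (p : ℕ) = (q : ℕ) + 1 then (Real.sqrt ((N - (q : ℕ)) * ((q : ℕ) + 1)) : ℂ) else 0

def Fmat (N : ℕ) : Matrix (Fin (N + 1)) (Fin (N + 1)) ℂ := (Emat N)ᴴ

/-- The Dirac operator `D_N = [[1+H, F], [E, 1-H]]` in block form on `ℂ^(N+1) ⊗ ℂ²`. -/
def DiracOp (N : ℕ) :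
    Matrix (Fin (N + 1) ⊕ Fin (N + 1)) (Fin (N + 1) ⊕ Fin (N + 1)) ℂ :=
  Matrix.fromBlocks (1 + Hmat N) (Fmat N) (Emat N) (1 - Hmat N)

/-- `a ⊗ 1₂` in block form. -/
def tensorOne (N : ℕ) (a : Matrix (Fin (N + 1)) (Fin (N + 1)) ℂ) :
    Matrix (Fin (N + 1) ⊕ Fin (N + 1)) (Fin (N + 1) ⊕ Fin (N + 1)) ℂ :=
  Matrix.fromBlocks a 0 0 a

/-- The operator norm of a square complex matrix, acting on Euclidean space. -/
def opNorm {n : Type*} [Fintype n] [DecidableEq n] (M : Matrix n n ℂ) : ℝ :=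
  ‖Matrix.toEuclideanCLM (𝕜 := ℂ) M‖

/-- The spectral distance between two states (functionals) on `M_(N+1)(ℂ)`:
`d_N(ω, ω') = sup { |ω(a) − ω'(a)| : a = a*, ‖[D_N, a ⊗ 1₂]‖ ≤ 1 }`. -/
def specDist (N : ℕ) (ω ω' : Matrix (Fin (N + 1)) (Fin (N + 1)) ℂ → ℂ) : ℝ :=
  sSup {r : ℝ | ∃ a : Matrix (Fin (N + 1)) (Fin (N + 1)) ℂ, a.IsHermitian ∧
    opNorm (DiracOp N * tensorOne N a - tensorOne N a * DiracOp N) ≤ 1 ∧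
    r = ‖ω a - ω' a‖}

/-- The Bloch coherent state vector `|φ,θ⟩_N`, with component at index `i` (i.e. `m = i − N/2`)
equal to `C(N, i)^(1/2) e^(−i m φ) (sin(θ/2))^(N/2+m) (cos(θ/2))^(N/2−m)`. -/
def blochVec (N : ℕ) (φ θ : ℝ) : Fin (N + 1) → ℂ := fun i =>
  (Real.sqrt (N.choose i) : ℂ) * Complex.exp (-Complex.I * ((i : ℂ) - (N : ℂ) / 2) * (φ : ℂ)) *
    (Real.sin (θ / 2) : ℂ) ^ (i : ℕ) * (Real.cos (θ / 2) : ℂ) ^ (N - (i : ℕ))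

/-- The Bloch coherent state `ψ^N_(φ,θ)(a) = ⟨φ,θ| a |φ,θ⟩_N`. -/
def psiState (N : ℕ) (a : Matrix (Fin (N + 1)) (Fin (N + 1)) ℂ) (φ θ : ℝ) : ℂ :=
  star (blochVec N φ θ) ⬝ᵥ a.mulVec (blochVec N φ θ)

/-- The auxiliary distance `ρ_N(θ)`: the supremum of `|ψ^N_(0,θ)(a) − ψ^N_(0,0)(a)|` over
hermitian *diagonal* matrices `a` with `‖[D_N, a ⊗ 1₂]‖ ≤ 1`. -/
def rhoAux (N : ℕ) (θ : ℝ) : ℝ :=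
  sSup {r : ℝ | ∃ a : Matrix (Fin (N + 1)) (Fin (N + 1)) ℂ, a.IsHermitian ∧ a.IsDiag ∧
    opNorm (DiracOp N * tensorOne N a - tensorOne N a * DiracOp N) ≤ 1 ∧
    r = ‖psiState N a 0 θ - psiState N a 0 0‖}

/-! ### Auxiliary lemmas -/

section Aux

lemma quad_bound {n : Type*} [Fintype n] [DecidableEq n] (M : Matrix n n ℂ) (x : n → ℂ) :
    ‖star x ⬝ᵥ M.mulVec x‖ ≤
      opNorm M * ‖((WithLp.equiv 2 (n → ℂ)).symm x : EuclideanSpace ℂ n)‖ ^ 2 := by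
  set y : EuclideanSpace ℂ n := (WithLp.equiv 2 (n → ℂ)).symm x
  have h1 : star x ⬝ᵥ M.mulVec x = inner (𝕜 := ℂ) y (Matrix.toEuclideanCLM (𝕜 := ℂ) M y) := by
    rw [dotProduct_comm]
    rfl
  rw [h1]
  calc ‖inner (𝕜 := ℂ) y (Matrix.toEuclideanCLM (𝕜 := ℂ) M y)‖
      ≤ ‖y‖ * ‖Matrix.toEuclideanCLM (𝕜 := ℂ) M y‖ := by
        exact norm_inner_le_norm _ _
    _ ≤ ‖y‖ * (opNorm M * ‖y‖) := by
        gcongr; exact (Matrix.toEuclideanCLM (𝕜 := ℂ) M).le_opNorm y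
    _ = opNorm M * ‖y‖ ^ 2 := by ring

lemma norm_sq_eq {n : Type*} [Fintype n] (x : n → ℂ) (c : ℝ)
    (h : star x ⬝ᵥ x = (c : ℂ)) :
    ‖((WithLp.equiv 2 (n → ℂ)).symm x : EuclideanSpace ℂ n)‖ ^ 2 = c := by
  set y : EuclideanSpace ℂ n := (WithLp.equiv 2 (n → ℂ)).symm x
  have h1 : (inner (𝕜 := ℂ) y y) = (c : ℂ) := by
    rw [← h, dotProduct_comm]; rfl
  have h2 : (inner (𝕜 := ℂ) y y) = ((‖y‖ : ℂ)) ^ 2 := by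
    rw [inner_self_eq_norm_sq_to_K]; norm_cast
  rw [h1] at h2
  exact_mod_cast h2.symm

lemma mulVec_dot {n : Type*} [Fintype n] (M : Matrix n n ℂ) (x y : n → ℂ) :
    M.mulVec x ⬝ᵥ y = x ⬝ᵥ Mᵀ.mulVec y := by
  rw [dotProduct_comm, dotProduct_mulVec, mulVec_transpose, dotProduct_comm]

lemma Emat_real (N : ℕ) (p q : Fin (N+1)) : star (Emat N p q) = Emat N p q := by
  unfold Emat; split_ifs <;> simp

lemma Fmat_apply (N : ℕ) (p q : Fin (N+1)) :
    Fmat N p q = if (q : ℕ) = (p : ℕ) + 1 then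
      (Real.sqrt ((N - (p : ℕ)) * ((p : ℕ) + 1)) : ℂ) else 0 := by
  rw [Fmat, conjTranspose_apply, Emat_real]; rfl

lemma Fmat_real (N : ℕ) (p q : Fin (N+1)) : star (Fmat N p q) = Fmat N p q := by
  rw [Fmat_apply]; split_ifs <;> simp

lemma Emat_transpose (N : ℕ) : (Emat N)ᵀ = Fmat N := by
  ext p q; rw [transpose_apply, Fmat_apply]; rfl

lemma Fmat_transpose (N : ℕ) : (Fmat N)ᵀ = Emat N := by
  ext p q; rw [transpose_apply, Fmat_apply, Emat]

lemma star_mulVec_self {n : Type*} [Fintype n] {M : Matrix n n ℂ}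
    (hM : ∀ i j, star (M i j) = M i j) {x : n → ℂ} (hx : star x = x) :
    star (M.mulVec x) = M.mulVec x := by
  funext i
  simp only [Pi.star_apply, mulVec, dotProduct, star_sum, star_mul']
  refine Finset.sum_congr rfl fun j _ => ?_
  have hxj : star (x j) = x j := congrFun hx j
  simp [hM i j, hxj, mul_comm]

lemma Emat_mulVec (N : ℕ) (x : Fin (N+1) → ℂ) (p : Fin (N+1)) (hp : 0 < (p:ℕ)) :
    (Emat N).mulVec x p
      = (Real.sqrt ((N - (((p:ℕ)-1 : ℕ) : ℝ)) * (p:ℕ)) : ℂ) * x ⟨(p:ℕ)-1, by omega⟩ := by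
  have hple := p.isLt
  rw [mulVec, dotProduct, Finset.sum_eq_single (⟨(p:ℕ)-1, by omega⟩ : Fin (N+1))]
  · simp only [Emat]
    rw [if_pos (show (p:ℕ) = (p:ℕ)-1+1 by omega)]
    have h2 : ((N:ℝ) - ((((p:ℕ)-1):ℕ):ℝ)) * (((((p:ℕ)-1):ℕ):ℝ)+1)
        = ((N:ℝ) - ((((p:ℕ)-1):ℕ):ℝ)) * ((p:ℕ):ℝ) := by
      have : ((((p:ℕ)-1):ℕ):ℝ) + 1 = ((p:ℕ):ℝ) := by
        rw [Nat.cast_sub hp]; ring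
      rw [this]
    rw [h2]
  · intro b _ hb
    simp only [Emat]
    rw [if_neg, zero_mul]
    intro h
    apply hb
    apply Fin.ext
    simp only [Fin.val_mk]
    omega
  · simp

lemma Emat_mulVec_zero (N : ℕ) (x : Fin (N+1) → ℂ) (p : Fin (N+1)) (hp : (p:ℕ) = 0) :
    (Emat N).mulVec x p = 0 := by
  rw [mulVec, dotProduct]
  apply Finset.sum_eq_zero
  intro b _
  simp only [Emat]
  rw [if_neg (by omega), zero_mul]

lemma Fmat_mulVec (N : ℕ) (x : Fin (N+1) → ℂ) (p : Fin (N+1)) (hp : (p:ℕ) < N) :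
    (Fmat N).mulVec x p
      = (Real.sqrt ((N - (p:ℕ)) * ((p:ℕ)+1)) : ℂ) * x ⟨(p:ℕ)+1, by omega⟩ := by
  rw [mulVec, dotProduct, Finset.sum_eq_single (⟨(p:ℕ)+1, by omega⟩ : Fin (N+1))]
  · rw [Fmat_apply, if_pos rfl]
  · intro b _ hb
    rw [Fmat_apply, if_neg, zero_mul]
    intro h
    apply hb
    apply Fin.ext
    simp only [Fin.val_mk]
    omega
  · simp

lemma Fmat_mulVec_top (N : ℕ) (x : Fin (N+1) → ℂ) (p : Fin (N+1)) (hp : (p:ℕ) = N) :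
    (Fmat N).mulVec x p = 0 := by
  rw [mulVec, dotProduct]
  apply Finset.sum_eq_zero
  intro b _
  rw [Fmat_apply, if_neg (by omega), zero_mul]

lemma fromBlocks_sub {n m α : Type*} [SubtractionMonoid α] (A A' : Matrix n n α)
    (B B' : Matrix n m α) (C C' : Matrix m n α) (D D' : Matrix m m α) :
    fromBlocks A B C D - fromBlocks A' B' C' D'
      = fromBlocks (A-A') (B-B') (C-C') (D-D') := by
  ext (i|i) (j|j) <;> simp [fromBlocks]

lemma comm_eq (N : ℕ) (a : Matrix (Fin (N+1)) (Fin (N+1)) ℂ) :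
    DiracOp N * tensorOne N a - tensorOne N a * DiracOp N =
      fromBlocks (Hmat N*a - a*Hmat N) (Fmat N*a - a*Fmat N)
        (Emat N*a - a*Emat N) (a*Hmat N - Hmat N*a) := by
  rw [DiracOp, tensorOne, fromBlocks_multiply, fromBlocks_multiply, fromBlocks_sub]
  congr 1 <;> noncomm_ring

end Aux

section Aux2

lemma sqrt_idA (N p : ℕ) (h1 : 1 ≤ p) (h2 : p ≤ N) :
    Real.sqrt (((N:ℝ) - ((p-1 : ℕ):ℝ)) * p) * Real.sqrt (N.choose (p-1))
      = p * Real.sqrt (N.choose p) := by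
  have e1 : ((N:ℝ) - ((p-1:ℕ):ℝ)) = ((N - (p-1) : ℕ) : ℝ) :=
    (Nat.cast_sub (by omega)).symm
  have key : (N - (p-1)) * p * N.choose (p-1) = p^2 * N.choose p := by
    have h := Nat.choose_succ_right_eq N (p-1)
    rw [Nat.sub_add_cancel h1] at h
    calc (N - (p-1)) * p * N.choose (p-1) = p * (N.choose (p-1) * (N - (p-1))) := by ring
      _ = p * (N.choose p * p) := by rw [h]
      _ = p^2 * N.choose p := by ring
  have hL : Real.sqrt (((N:ℝ) - ((p-1:ℕ):ℝ)) * p) * Real.sqrt (N.choose (p-1))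
      = Real.sqrt (((N-(p-1)) * p * N.choose (p-1) : ℕ) : ℝ) := by
    rw [e1, ← Real.sqrt_mul (by positivity)]
    norm_cast
  have hR : (p:ℝ) * Real.sqrt (N.choose p) = Real.sqrt ((p^2 * N.choose p : ℕ) : ℝ) := by
    rw [Nat.cast_mul, Real.sqrt_mul (by positivity), Nat.cast_pow,
      Real.sqrt_sq (by positivity)]
  rw [hL, hR, key]

lemma sqrt_idB (N p : ℕ) (h : p < N) :
    Real.sqrt (((N:ℝ) - p) * (p+1)) * Real.sqrt (N.choose (p+1))
      = ((N:ℝ) - p) * Real.sqrt (N.choose p) := by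
  have e1 : ((N:ℝ) - (p:ℝ)) = ((N - p : ℕ) : ℝ) := (Nat.cast_sub (by omega)).symm
  have key : (N - p) * (p+1) * N.choose (p+1) = (N-p)^2 * N.choose p := by
    have h2 := Nat.choose_succ_right_eq N p
    calc (N - p) * (p+1) * N.choose (p+1) = (N-p) * (N.choose (p+1) * (p+1)) := by ring
      _ = (N-p) * (N.choose p * (N-p)) := by rw [h2]
      _ = (N-p)^2 * N.choose p := by ring
  have hL : Real.sqrt (((N:ℝ) - p) * (p+1)) * Real.sqrt (N.choose (p+1))
      = Real.sqrt (((N-p) * (p+1) * N.choose (p+1) : ℕ) : ℝ) := by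
    rw [e1, ← Real.sqrt_mul (by positivity)]
    norm_cast
  have hR : ((N:ℝ) - p) * Real.sqrt (N.choose p)
      = Real.sqrt (((N-p)^2 * N.choose p : ℕ) : ℝ) := by
    rw [e1, Nat.cast_mul, Real.sqrt_mul (by positivity), Nat.cast_pow,
      Real.sqrt_sq (by positivity)]
  rw [hL, hR, key]

lemma blochVec_zero_phi (N : ℕ) (θ : ℝ) (i : Fin (N+1)) :
    blochVec N 0 θ i
      = ((Real.sqrt (N.choose i) * Real.sin (θ/2)^(i:ℕ) * Real.cos (θ/2)^(N-(i:ℕ)) : ℝ) : ℂ) := by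
  simp only [blochVec, Complex.ofReal_zero, mul_zero, Complex.exp_zero]
  push_cast
  ring

lemma blochVec_real (N : ℕ) (θ : ℝ) : star (blochVec N 0 θ) = blochVec N 0 θ := by
  funext i
  rw [Pi.star_apply, blochVec_zero_phi]
  exact Complex.conj_ofReal _

lemma star_blochVec (N : ℕ) (φ θ : ℝ) :
    star (blochVec N φ θ) = blochVec N (-φ) θ := by
  funext i
  simp only [Pi.star_apply, blochVec, Complex.star_def]
  rw [_root_.map_mul, _root_.map_mul, _root_.map_mul, map_pow, map_pow, Complex.conj_ofReal, Complex.conj_ofReal,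
    Complex.conj_ofReal, ← Complex.exp_conj]
  congr 2
  rw [_root_.map_mul, _root_.map_mul, map_neg, Complex.conj_I, map_sub, map_div₀]
  simp only [Complex.conj_natCast, Complex.conj_ofReal, map_ofNat]
  push_cast
  ring

end Aux2

section Aux3

lemma bloch_norm (N : ℕ) (φ θ : ℝ) : star (blochVec N φ θ) ⬝ᵥ blochVec N φ θ = 1 := by
  rw [star_blochVec, dotProduct]
  have hterm : ∀ i : Fin (N+1), blochVec N (-φ) θ i * blochVec N φ θ i
      = (((N.choose i : ℝ) * (Real.sin (θ/2)^2)^(i:ℕ)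
          * (Real.cos (θ/2)^2)^(N-(i:ℕ)) : ℝ) : ℂ) := by
    intro i
    simp only [blochVec]
    have he : Complex.exp (-Complex.I * ((i:ℂ) - (N:ℂ)/2) * ((-φ:ℝ):ℂ)) *
        Complex.exp (-Complex.I * ((i:ℂ) - (N:ℂ)/2) * (φ:ℂ)) = 1 := by
      rw [← Complex.exp_add, ← Complex.exp_zero]
      congr 1
      push_cast
      ring
    calc (Real.sqrt (N.choose i) : ℂ) * Complex.exp (-Complex.I * ((i:ℂ) - (N:ℂ)/2) * ((-φ:ℝ):ℂ))
          * (Real.sin (θ/2) : ℂ)^(i:ℕ) * (Real.cos (θ/2) : ℂ)^(N-(i:ℕ))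
          * ((Real.sqrt (N.choose i) : ℂ) * Complex.exp (-Complex.I * ((i:ℂ) - (N:ℂ)/2) * (φ:ℂ))
          * (Real.sin (θ/2) : ℂ)^(i:ℕ) * (Real.cos (θ/2) : ℂ)^(N-(i:ℕ)))
        = (Complex.exp (-Complex.I * ((i:ℂ) - (N:ℂ)/2) * ((-φ:ℝ):ℂ)) *
            Complex.exp (-Complex.I * ((i:ℂ) - (N:ℂ)/2) * (φ:ℂ)))
          * (((Real.sqrt (N.choose i) : ℂ) * (Real.sqrt (N.choose i) : ℂ))
            * ((Real.sin (θ/2) : ℂ)^(i:ℕ) * (Real.sin (θ/2) : ℂ)^(i:ℕ))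
            * ((Real.cos (θ/2) : ℂ)^(N-(i:ℕ)) * (Real.cos (θ/2) : ℂ)^(N-(i:ℕ)))) := by ring
      _ = _ := by
          rw [he, one_mul]
          have hK : (Real.sqrt (N.choose i) : ℂ) * (Real.sqrt (N.choose i) : ℂ)
              = ((N.choose i : ℝ) : ℂ) := by
            norm_cast
            exact Real.mul_self_sqrt (by positivity)
          rw [hK, ← pow_add, ← pow_add]
          norm_cast
          rw [show (i:ℕ) + (i:ℕ) = 2*(i:ℕ) by ring,
            show (N-(i:ℕ)) + (N-(i:ℕ)) = 2*(N-(i:ℕ)) by ring, pow_mul, pow_mul]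
  rw [Finset.sum_congr rfl (fun i _ => hterm i), ← Complex.ofReal_sum]
  norm_cast
  have hsum : ∑ i : Fin (N+1), ((N.choose i : ℝ) * (Real.sin (θ/2)^2)^(i:ℕ)
      * (Real.cos (θ/2)^2)^(N-(i:ℕ)))
      = (Real.sin (θ/2)^2 + Real.cos (θ/2)^2)^N := by
    rw [add_pow, ← Fin.sum_univ_eq_sum_range
      (fun k => (Real.sin (θ/2)^2)^k * (Real.cos (θ/2)^2)^(N-k) * ((N.choose k : ℕ) : ℝ)) (N+1)]
    apply Finset.sum_congr rfl
    intro k _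
    ring
  rw [hsum, Real.sin_sq_add_cos_sq, one_pow]

lemma EF_mulVec_bloch (N : ℕ) (θ : ℝ) (p : Fin (N+1)) :
    (Emat N - Fmat N).mulVec (blochVec N 0 θ) p
      = ((Real.sqrt (N.choose p) *
          (((p:ℕ):ℝ) * Real.sin (θ/2)^((p:ℕ)-1) * Real.cos (θ/2)^(N-(p:ℕ)+1)
           - ((N-(p:ℕ) : ℕ):ℝ) * Real.sin (θ/2)^((p:ℕ)+1) * Real.cos (θ/2)^(N-(p:ℕ)-1)) : ℝ) : ℂ) := by
  have hple : (p:ℕ) ≤ N := by have := p.isLt; omega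
  rw [sub_mulVec]
  have hE : (Emat N).mulVec (blochVec N 0 θ) p
      = ((((p:ℕ):ℝ) * (Real.sqrt (N.choose p) * Real.sin (θ/2)^((p:ℕ)-1)
          * Real.cos (θ/2)^(N-(p:ℕ)+1)) : ℝ) : ℂ) := by
    rcases Nat.eq_zero_or_pos (p:ℕ) with h0|h0
    · rw [Emat_mulVec_zero _ _ _ h0, h0]
      norm_num
    · rw [Emat_mulVec _ _ _ h0, blochVec_zero_phi]
      simp only [Fin.val_mk]
      rw [← Complex.ofReal_mul, Complex.ofReal_inj]
      have hid := sqrt_idA N (p:ℕ) h0 hple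
      have hexp : N - ((p:ℕ)-1) = N - (p:ℕ) + 1 := by omega
      rw [hexp]
      linear_combination (Real.sin (θ/2)^((p:ℕ)-1) * Real.cos (θ/2)^(N-(p:ℕ)+1)) * hid
  have hF : (Fmat N).mulVec (blochVec N 0 θ) p
      = ((((N-(p:ℕ):ℕ):ℝ) * (Real.sqrt (N.choose p) * Real.sin (θ/2)^((p:ℕ)+1)
          * Real.cos (θ/2)^(N-(p:ℕ)-1)) : ℝ) : ℂ) := by
    rcases eq_or_lt_of_le hple with hN|hN
    · rw [Fmat_mulVec_top _ _ _ hN]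
      have hz : N - (p:ℕ) = 0 := by omega
      rw [hz]
      norm_num
    · rw [Fmat_mulVec _ _ _ hN, blochVec_zero_phi]
      simp only [Fin.val_mk]
      rw [← Complex.ofReal_mul, Complex.ofReal_inj]
      have hid := sqrt_idB N (p:ℕ) hN
      have hexp : N - ((p:ℕ)+1) = N - (p:ℕ) - 1 := by omega
      have hcast : ((N-(p:ℕ):ℕ):ℝ) = (N:ℝ) - ((p:ℕ):ℝ) := Nat.cast_sub hple
      rw [hexp, hcast]
      linear_combination (Real.sin (θ/2)^((p:ℕ)+1) * Real.cos (θ/2)^(N-(p:ℕ)-1)) * hid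
  rw [Pi.sub_apply, hE, hF, ← Complex.ofReal_sub, Complex.ofReal_inj]
  ring

end Aux3

section Meridian

lemma bloch_hasDerivAt (N : ℕ) (p : Fin (N+1)) (θ : ℝ) :
    HasDerivAt (fun t => blochVec N 0 t p)
      ((1/2 : ℂ) * ((Emat N - Fmat N).mulVec (blochVec N 0 θ)) p) θ := by
  have h2 : HasDerivAt (fun t : ℝ => t/2) (1/2) θ := (hasDerivAt_id θ).div_const 2
  have hs : HasDerivAt (fun t : ℝ => Real.sin (t/2)) (Real.cos (θ/2) * (1/2)) θ := by
    simpa [Function.comp_def] using (Real.hasDerivAt_sin (θ/2)).comp θ h2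
  have hc : HasDerivAt (fun t : ℝ => Real.cos (t/2)) (-Real.sin (θ/2) * (1/2)) θ := by
    simpa [Function.comp_def] using (Real.hasDerivAt_cos (θ/2)).comp θ h2
  have hsp := hs.pow (p:ℕ)
  have hcp := hc.pow (N-(p:ℕ))
  have hr := (hsp.mul hcp).const_mul (Real.sqrt (N.choose p))
  have hC := hr.ofReal_comp
  have hfun : (fun t => blochVec N 0 t p)
      = fun t => ((Real.sqrt (N.choose p) * (Real.sin (t/2)^((p:ℕ))
          * Real.cos (t/2)^(N-(p:ℕ))) : ℝ) : ℂ) := by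
    funext t
    rw [blochVec_zero_phi]
    norm_cast
    ring
  rw [hfun]
  convert hC using 1
  · rfl
  rw [EF_mulVec_bloch]
  simp only [Pi.pow_apply]
  push_cast
  ring

lemma psi_hasDerivAt (N : ℕ) (a : Matrix (Fin (N+1)) (Fin (N+1)) ℂ) (θ : ℝ) :
    HasDerivAt (fun t => psiState N a 0 t)
      ((fun p => (1/2 : ℂ) * ((Emat N - Fmat N).mulVec (blochVec N 0 θ)) p) ⬝ᵥ
          a.mulVec (blochVec N 0 θ)
        + blochVec N 0 θ ⬝ᵥ a.mulVec
          (fun p => (1/2 : ℂ) * ((Emat N - Fmat N).mulVec (blochVec N 0 θ)) p)) θ := by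
  have hfun : (fun t => psiState N a 0 t)
      = fun t => ∑ p, (blochVec N 0 t p * ∑ q, a p q * blochVec N 0 t q) := by
    funext t
    rw [psiState, blochVec_real]
    rfl
  rw [hfun]
  have hterm : ∀ p : Fin (N+1), HasDerivAt (fun t => blochVec N 0 t p * ∑ q, a p q * blochVec N 0 t q)
      ((1/2 : ℂ) * ((Emat N - Fmat N).mulVec (blochVec N 0 θ)) p * (∑ q, a p q * blochVec N 0 θ q)
        + blochVec N 0 θ p *
          (∑ q, a p q * ((1/2 : ℂ) * ((Emat N - Fmat N).mulVec (blochVec N 0 θ)) q))) θ := by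
    intro p
    exact (bloch_hasDerivAt N p θ).mul
      (HasDerivAt.fun_sum fun q _ => (bloch_hasDerivAt N q θ).const_mul (a p q))
  have := HasDerivAt.fun_sum (fun p (_ : p ∈ Finset.univ) => hterm p)
  refine this.congr_deriv ?_
  simp only [dotProduct, mulVec, Finset.sum_add_distrib]

lemma meridian_deriv_eq (N : ℕ) (a : Matrix (Fin (N+1)) (Fin (N+1)) ℂ)
    (V : Fin (N+1) → ℂ) (hV : star V = V) :
    (fun p => (1/2 : ℂ) * ((Emat N - Fmat N).mulVec V) p) ⬝ᵥ a.mulVec V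
      + V ⬝ᵥ a.mulVec (fun p => (1/2 : ℂ) * ((Emat N - Fmat N).mulVec V) p)
    = (-Complex.I/2) * (star (Sum.elim V (Complex.I • V)) ⬝ᵥ
        (DiracOp N * tensorOne N a - tensorOne N a * DiracOp N).mulVec
          (Sum.elim V (Complex.I • V))) := by
  have hstar : star (Sum.elim V (Complex.I • V)) = Sum.elim V ((-Complex.I) • V) := by
    funext x
    cases x with
    | inl i => simpa using congrFun hV i
    | inr i =>
      simp only [Sum.elim_inr, Pi.star_apply, Pi.smul_apply, smul_eq_mul, star_mul',
        Complex.star_def, Complex.conj_I]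
      have hVi : star (V i) = V i := congrFun hV i
      rw [Complex.star_def] at hVi
      rw [hVi]
  have hW : (fun p => (1/2 : ℂ) * ((Emat N - Fmat N).mulVec V) p)
      = (1/2 : ℂ) • ((Emat N - Fmat N).mulVec V) := by
    funext p; simp [Pi.smul_apply, smul_eq_mul]
  rw [comm_eq, hstar, hW, fromBlocks_mulVec, sumElim_dotProduct_sumElim]
  simp only [Sum.elim_comp_inl, Sum.elim_comp_inr, smul_dotProduct, dotProduct_smul,
    mulVec_smul, sub_mulVec, add_mulVec, sub_dotProduct, add_dotProduct,
    dotProduct_sub, dotProduct_add, mulVec_dot, transpose_sub, Emat_transpose, Fmat_transpose,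
    Matrix.sub_mul, Matrix.mul_sub, mulVec_mulVec, smul_eq_mul, mulVec_sub, mulVec_add]
  have hI3 : Complex.I ^ 3 = -Complex.I := by
    rw [pow_succ, Complex.I_sq]
    ring
  ring_nf
  simp only [Complex.I_sq, hI3]
  ring

lemma meridian_deriv_bound (N : ℕ) (a : Matrix (Fin (N+1)) (Fin (N+1)) ℂ)
    (hc : opNorm (DiracOp N * tensorOne N a - tensorOne N a * DiracOp N) ≤ 1) (θ : ℝ) :
    ‖(fun p => (1/2 : ℂ) * ((Emat N - Fmat N).mulVec (blochVec N 0 θ)) p) ⬝ᵥ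
          a.mulVec (blochVec N 0 θ)
        + blochVec N 0 θ ⬝ᵥ a.mulVec
          (fun p => (1/2 : ℂ) * ((Emat N - Fmat N).mulVec (blochVec N 0 θ)) p)‖ ≤ 1 := by
  set V := blochVec N 0 θ with hVdef
  set C := DiracOp N * tensorOne N a - tensorOne N a * DiracOp N with hCdef
  rw [meridian_deriv_eq N a V (blochVec_real N θ)]
  set u : (Fin (N+1) ⊕ Fin (N+1)) → ℂ := Sum.elim V (Complex.I • V) with hu
  have hnormu : star u ⬝ᵥ u = ((2:ℝ) : ℂ) := by
    have hstar : star u = Sum.elim (star V) (star (Complex.I • V)) := by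
      funext x; cases x <;> rfl
    rw [hu, hstar, sumElim_dotProduct_sumElim]
    have h1 : star V ⬝ᵥ V = 1 := bloch_norm N 0 θ
    have h2 : star (Complex.I • V) = (-Complex.I) • star V := by
      funext i
      simp only [Pi.star_apply, Pi.smul_apply, smul_eq_mul, star_mul', Complex.star_def,
        Complex.conj_I]
      try ring
    rw [h2, smul_dotProduct, dotProduct_smul, h1, smul_eq_mul, smul_eq_mul]
    norm_num [Complex.I_mul_I]
  have hq := quad_bound C u
  have hn2 : ‖((WithLp.equiv 2 ((Fin (N+1) ⊕ Fin (N+1)) → ℂ)).symm u :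
      EuclideanSpace ℂ (Fin (N+1) ⊕ Fin (N+1)))‖ ^ 2 = 2 := norm_sq_eq u 2 hnormu
  rw [hn2] at hq
  rw [norm_mul]
  have h3 : ‖(-Complex.I/2 : ℂ)‖ = 1/2 := by
    simp [norm_div]
  rw [h3]
  calc (1/2) * ‖star u ⬝ᵥ C.mulVec u‖ ≤ (1/2) * (opNorm C * 2) := by
        gcongr
    _ ≤ (1/2) * (1 * 2) := by gcongr
    _ = 1 := by norm_num

lemma meridian_bound (N : ℕ) (a : Matrix (Fin (N+1)) (Fin (N+1)) ℂ)
    (hc : opNorm (DiracOp N * tensorOne N a - tensorOne N a * DiracOp N) ≤ 1)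
    (θ : ℝ) (hθ : 0 ≤ θ) :
    ‖psiState N a 0 θ - psiState N a 0 0‖ ≤ θ := by
  have hmvt := norm_image_sub_le_of_norm_deriv_le_segment'
    (f := fun t => psiState N a 0 t)
    (f' := fun t => (fun p => (1/2 : ℂ) * ((Emat N - Fmat N).mulVec (blochVec N 0 t)) p) ⬝ᵥ
          a.mulVec (blochVec N 0 t)
        + blochVec N 0 t ⬝ᵥ a.mulVec
          (fun p => (1/2 : ℂ) * ((Emat N - Fmat N).mulVec (blochVec N 0 t)) p))
    (a := 0) (b := θ) (C := 1)
    (fun t _ => (psi_hasDerivAt N a t).hasDerivWithinAt)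
    (fun t _ => meridian_deriv_bound N a hc t)
    θ (Set.right_mem_Icc.mpr hθ)
  simpa using hmvt

end Meridian

section Equator

lemma Hmat_mulVec (N : ℕ) (x : Fin (N+1) → ℂ) (p : Fin (N+1)) :
    (Hmat N).mulVec x p = ((p:ℂ) - (N:ℂ)/2) * x p := by
  simp [Hmat, mulVec_diagonal]

lemma bloch_phi_hasDerivAt (N : ℕ) (θ0 : ℝ) (q : Fin (N+1)) (φ : ℝ) :
    HasDerivAt (fun t => blochVec N t θ0 q)
      (((-Complex.I) • (Hmat N).mulVec (blochVec N φ θ0)) q) φ := by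
  have h1 : HasDerivAt (fun t : ℝ => ((t : ℝ) : ℂ)) 1 φ := by
    simpa using (hasDerivAt_id φ).ofReal_comp
  have h2 := h1.const_mul (-Complex.I * ((q:ℂ) - (N:ℂ)/2))
  have h3 := h2.cexp
  have h4 := ((h3.const_mul ((Real.sqrt (N.choose q) : ℝ) : ℂ)).mul_const
    ((Real.sin (θ0/2) : ℂ) ^ (q:ℕ))).mul_const ((Real.cos (θ0/2) : ℂ) ^ (N-(q:ℕ)))
  have hfun : (fun t => blochVec N t θ0 q)
      = fun t => ((Real.sqrt (N.choose q) : ℝ) : ℂ) *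
          Complex.exp (-Complex.I * ((q:ℂ) - (N:ℂ)/2) * ((t:ℝ):ℂ)) *
          ((Real.sin (θ0/2) : ℂ) ^ (q:ℕ)) * ((Real.cos (θ0/2) : ℂ) ^ (N-(q:ℕ))) := by
    funext t; rfl
  rw [hfun]
  refine h4.congr_deriv ?_
  rw [Pi.smul_apply, Hmat_mulVec, blochVec]
  simp only [smul_eq_mul]
  ring

lemma bloch_negphi_hasDerivAt (N : ℕ) (θ0 : ℝ) (p : Fin (N+1)) (φ : ℝ) :
    HasDerivAt (fun t => blochVec N (-t) θ0 p)
      ((Complex.I • (Hmat N).mulVec (blochVec N (-φ) θ0)) p) φ := by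
  have hneg : HasDerivAt (fun t : ℝ => -t) (-1) φ := by
    exact (hasDerivAt_id' φ).neg
  have h0 := HasDerivAt.scomp_of_eq (g₁ := fun t => blochVec N t θ0 p) (h := fun t : ℝ => -t)
    φ (bloch_phi_hasDerivAt N θ0 p (-φ)) hneg rfl
  have h2 : HasDerivAt (fun t => blochVec N (-t) θ0 p)
      (((-1 : ℝ)) • (((-Complex.I) • (Hmat N).mulVec (blochVec N (-φ) θ0)) p)) φ := by
    simpa [Function.comp_def] using h0
  convert h2 using 1
  rw [show ((-1 : ℝ) • (((-Complex.I) • (Hmat N).mulVec (blochVec N (-φ) θ0)) p))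
      = (-1 : ℂ) * (((-Complex.I) • (Hmat N).mulVec (blochVec N (-φ) θ0)) p) from by
    rw [Complex.real_smul]; push_cast; ring]
  simp only [Pi.smul_apply, smul_eq_mul]
  ring

lemma psi_phi_hasDerivAt (N : ℕ) (a : Matrix (Fin (N+1)) (Fin (N+1)) ℂ) (θ0 φ : ℝ) :
    HasDerivAt (fun t => psiState N a t θ0)
      ((Complex.I • (Hmat N).mulVec (blochVec N (-φ) θ0)) ⬝ᵥ a.mulVec (blochVec N φ θ0)
        + blochVec N (-φ) θ0 ⬝ᵥ a.mulVec
            ((-Complex.I) • (Hmat N).mulVec (blochVec N φ θ0))) φ := by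
  have hfun : (fun t => psiState N a t θ0)
      = fun t => ∑ p, (blochVec N (-t) θ0 p * ∑ q, a p q * blochVec N t θ0 q) := by
    funext t
    rw [psiState, star_blochVec]
    rfl
  rw [hfun]
  have hterm : ∀ p : Fin (N+1), HasDerivAt
      (fun t => blochVec N (-t) θ0 p * ∑ q, a p q * blochVec N t θ0 q)
      ((Complex.I • (Hmat N).mulVec (blochVec N (-φ) θ0)) p * (∑ q, a p q * blochVec N φ θ0 q)
        + blochVec N (-φ) θ0 p *
          (∑ q, a p q * (((-Complex.I) • (Hmat N).mulVec (blochVec N φ θ0)) q))) φ := by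
    intro p
    exact (bloch_negphi_hasDerivAt N θ0 p φ).mul
      (HasDerivAt.fun_sum fun q _ => (bloch_phi_hasDerivAt N θ0 q φ).const_mul (a p q))
  have := HasDerivAt.fun_sum (fun p (_ : p ∈ Finset.univ) => hterm p)
  refine this.congr_deriv ?_
  simp only [dotProduct, mulVec, Finset.sum_add_distrib]

lemma equator_deriv_eq (N : ℕ) (a : Matrix (Fin (N+1)) (Fin (N+1)) ℂ) (θ0 φ : ℝ) :
    (Complex.I • (Hmat N).mulVec (blochVec N (-φ) θ0)) ⬝ᵥ a.mulVec (blochVec N φ θ0)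
        + blochVec N (-φ) θ0 ⬝ᵥ a.mulVec
            ((-Complex.I) • (Hmat N).mulVec (blochVec N φ θ0))
      = Complex.I * (star (Sum.elim (blochVec N φ θ0) 0) ⬝ᵥ
          (DiracOp N * tensorOne N a - tensorOne N a * DiracOp N).mulVec
            (Sum.elim (blochVec N φ θ0) 0)) := by
  have hstar : star (Sum.elim (blochVec N φ θ0) (0 : Fin (N+1) → ℂ))
      = Sum.elim (blochVec N (-φ) θ0) 0 := by
    funext x
    cases x with
    | inl i => simpa using congrFun (star_blochVec N φ θ0) i
    | inr i => simp
  rw [comm_eq, hstar, fromBlocks_mulVec, sumElim_dotProduct_sumElim]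
  simp only [Sum.elim_comp_inl, Sum.elim_comp_inr, mulVec_zero, add_zero, zero_dotProduct,
    dotProduct_zero, smul_dotProduct, dotProduct_smul, mulVec_smul, sub_mulVec,
    sub_dotProduct, dotProduct_sub, mulVec_dot, diagonal_transpose, Hmat,
    mulVec_mulVec, smul_eq_mul]
  ring

lemma equator_deriv_bound (N : ℕ) (a : Matrix (Fin (N+1)) (Fin (N+1)) ℂ)
    (hc : opNorm (DiracOp N * tensorOne N a - tensorOne N a * DiracOp N) ≤ 1) (θ0 φ : ℝ) :
    ‖(Complex.I • (Hmat N).mulVec (blochVec N (-φ) θ0)) ⬝ᵥ a.mulVec (blochVec N φ θ0)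
        + blochVec N (-φ) θ0 ⬝ᵥ a.mulVec
            ((-Complex.I) • (Hmat N).mulVec (blochVec N φ θ0))‖ ≤ 1 := by
  rw [equator_deriv_eq]
  set C := DiracOp N * tensorOne N a - tensorOne N a * DiracOp N with hCdef
  set u : (Fin (N+1) ⊕ Fin (N+1)) → ℂ := Sum.elim (blochVec N φ θ0) 0 with hu
  have hnormu : star u ⬝ᵥ u = ((1:ℝ) : ℂ) := by
    have hstar : star u = Sum.elim (star (blochVec N φ θ0)) 0 := by
      funext x
      cases x with
      | inl i => rfl
      | inr i => simp [hu]
    rw [hu, hstar, sumElim_dotProduct_sumElim, bloch_norm]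
    simp
  have hq := quad_bound C u
  have hn2 : ‖((WithLp.equiv 2 ((Fin (N+1) ⊕ Fin (N+1)) → ℂ)).symm u :
      EuclideanSpace ℂ (Fin (N+1) ⊕ Fin (N+1)))‖ ^ 2 = 1 := norm_sq_eq u 1 hnormu
  rw [hn2] at hq
  rw [norm_mul, Complex.norm_I, one_mul]
  calc ‖star u ⬝ᵥ C.mulVec u‖ ≤ opNorm C * 1 := hq
    _ ≤ 1 * 1 := by gcongr
    _ = 1 := by norm_num

lemma equator_bound (N : ℕ) (a : Matrix (Fin (N+1)) (Fin (N+1)) ℂ)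
    (hc : opNorm (DiracOp N * tensorOne N a - tensorOne N a * DiracOp N) ≤ 1) (θ0 φ : ℝ) :
    ‖psiState N a φ θ0 - psiState N a 0 θ0‖ ≤ |φ| := by
  rcases le_or_gt 0 φ with hφ | hφ
  · have hmvt := norm_image_sub_le_of_norm_deriv_le_segment'
      (f := fun t => psiState N a t θ0)
      (f' := fun t => (Complex.I • (Hmat N).mulVec (blochVec N (-t) θ0)) ⬝ᵥ
          a.mulVec (blochVec N t θ0)
        + blochVec N (-t) θ0 ⬝ᵥ a.mulVec
            ((-Complex.I) • (Hmat N).mulVec (blochVec N t θ0)))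
      (a := 0) (b := φ) (C := 1)
      (fun t _ => (psi_phi_hasDerivAt N a θ0 t).hasDerivWithinAt)
      (fun t _ => equator_deriv_bound N a hc θ0 t)
      φ (Set.right_mem_Icc.mpr hφ)
    rw [abs_of_nonneg hφ]
    simpa using hmvt
  · have hmvt := norm_image_sub_le_of_norm_deriv_le_segment'
      (f := fun t => psiState N a t θ0)
      (f' := fun t => (Complex.I • (Hmat N).mulVec (blochVec N (-t) θ0)) ⬝ᵥ
          a.mulVec (blochVec N t θ0)
        + blochVec N (-t) θ0 ⬝ᵥ a.mulVec
            ((-Complex.I) • (Hmat N).mulVec (blochVec N t θ0)))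
      (a := φ) (b := 0) (C := 1)
      (fun t _ => (psi_phi_hasDerivAt N a θ0 t).hasDerivWithinAt)
      (fun t _ => equator_deriv_bound N a hc θ0 t)
      0 (Set.right_mem_Icc.mpr hφ.le)
    rw [abs_of_neg hφ, ← norm_neg]
    have : -(psiState N a φ θ0 - psiState N a 0 θ0)
        = psiState N a 0 θ0 - psiState N a φ θ0 := by ring
    rw [this]
    simpa using hmvt

end Equator

theorem specDist_bounds (N : ℕ) (hN : 1 ≤ N) :
    (∀ θ ∈ Set.Icc (0 : ℝ) Real.pi,
      rhoAux N θ ≤ specDist N (fun a => psiState N a 0 θ) (fun a => psiState N a 0 0) ∧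
      specDist N (fun a => psiState N a 0 θ) (fun a => psiState N a 0 0) ≤ θ) ∧
    (∀ φ ∈ Set.Ioc (-Real.pi) Real.pi,
      specDist N (fun a => psiState N a φ (Real.pi / 2))
        (fun a => psiState N a 0 (Real.pi / 2)) ≤ |φ|) := by
  constructor
  · intro θ hθ
    constructor
    · apply csSup_le_csSup
      · refine ⟨θ, ?_⟩
        rintro r ⟨a, _, hc, rfl⟩
        exact meridian_bound N a hc θ hθ.1
      · refine ⟨0, 0, isHermitian_zero, isDiag_zero, ?_, ?_⟩
        · have h0 : tensorOne N (0 : Matrix (Fin (N+1)) (Fin (N+1)) ℂ) = 0 := by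
            ext (i|i) (j|j) <;> simp [tensorOne, fromBlocks]
          rw [h0]
          simp only [mul_zero, zero_mul, sub_zero]
          rw [opNorm, map_zero, norm_zero]
          norm_num
        · simp [psiState, zero_mulVec, dotProduct_zero]
      · rintro r ⟨a, ha, _, hc, rfl⟩
        exact ⟨a, ha, hc, rfl⟩
    · apply Real.sSup_le
      · rintro r ⟨a, _, hc, rfl⟩
        exact meridian_bound N a hc θ hθ.1
      · exact hθ.1
  · intro φ _
    apply Real.sSup_le
    · rintro r ⟨a, _, hc, rfl⟩
      exact equator_bound N a hc (Real.pi/2) φ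
    · positivity
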